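/- For every zip tree t, natural number r, and key k, the tree insert r k t is again a zip tree, its set of keys equals {k} ∪ set t, and both children of insert r k t have rank at most rk t. -/

import Mathlib

/-- Ranked binary trees: each node stores a natural-number rank and a key. -/
inductive ZTree (α : Type*) where
  | empty : ZTree α
  | node (rank : ℕ) (key : α) (left right : ZTree α) : ZTree α

namespace ZTree

/-- The rank of the root of a tree, with `rk empty = -1`. -/
def rk {α : Type*} : ZTree α → ℤ
  | .empty => -1
  | .node r _ _ _ => (r : ℤ)

/-- The set of keys occurring in a tree. -/
def keys {α : Type*} : ZTree α → Set α
  | .empty => ∅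
  | .node _ k l r => {k} ∪ l.keys ∪ r.keys

/-- The left child of a tree (the empty tree for the empty tree). -/
def left {α : Type*} : ZTree α → ZTree α
  | .empty => .empty
  | .node _ _ l _ => l

/-- The right child of a tree (the empty tree for the empty tree). -/
def right {α : Type*} : ZTree α → ZTree α
  | .empty => .empty
  | .node _ _ _ r => r

/-- The number of nodes of a tree. -/
def size {α : Type*} : ZTree α → ℕ
  | .empty => 0
  | .node _ _ l r => l.size + r.size + 1

/-- The zip tree invariant: binary-search-tree property on keys, the rank of a left
child is strictly smaller than the rank of its parent, and the rank of a right child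
is at most the rank of its parent. -/
def IsZipTree {α : Type*} [LinearOrder α] : ZTree α → Prop
  | .empty => True
  | .node rank k l r =>
      (∀ x ∈ l.keys, x < k) ∧ (∀ x ∈ r.keys, k < x) ∧
      l.rk < (rank : ℤ) ∧ r.rk ≤ (rank : ℤ) ∧ l.IsZipTree ∧ r.IsZipTree

/-- Zip-tree insertion. -/
def insert {α : Type*} [LinearOrder α] (r : ℕ) (k : α) : ZTree α → ZTree α
  | .empty => .node r k .empty .empty
  | .node rank key l rt =>
    if k = key then .node rank key l rt
    else if k < key then
      match ZTree.insert r k l with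
      | .empty => .node rank key .empty rt
      | .node tr tk tl trr =>
          if (tr : ℤ) < (rank : ℤ) then .node rank key (.node tr tk tl trr) rt
          else .node tr tk tl (.node rank key trr rt)
    else
      match ZTree.insert r k rt with
      | .empty => .node rank key l .empty
      | .node tr tk tl trr =>
          if (tr : ℤ) ≤ (rank : ℤ) then .node rank key l (.node tr tk tl trr)
          else .node tr tk (.node rank key l tl) trr

/-- Zipping two trees. -/
def zip {α : Type*} (k : α) : ZTree α → ZTree α → ZTree α
  | .empty, .empty => .empty
  | .empty, t => t
  | t, .empty => t
  | .node r1 k1 l1 rt1, .node r2 k2 l2 rt2 =>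
    if r1 < r2 then
      .node r2 k2 (ZTree.zip k (.node r1 k1 l1 rt1) l2) rt2
    else
      .node r1 k1 l1 (ZTree.zip k rt1 (.node r2 k2 l2 rt2))
  termination_by t1 t2 => t1.size + t2.size
  decreasing_by
    · simp [ZTree.size]
    · simp [ZTree.size]

/-- Zip-tree deletion. -/
def delete {α : Type*} [LinearOrder α] (k : α) : ZTree α → ZTree α
  | .empty => .empty
  | .node rank key l r =>
    if k < key then .node rank key (ZTree.delete k l) r
    else if key < k then .node rank key l (ZTree.delete k r)
    else ZTree.zip k l r

end ZTree

set_option maxHeartbeats 1000000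

theorem insert_correct {α : Type*} [LinearOrder α] (t : ZTree α)
    (ht : t.IsZipTree) (r : ℕ) (k : α) :
    (ZTree.insert r k t).IsZipTree ∧
    (ZTree.insert r k t).keys = {k} ∪ t.keys ∧
    (ZTree.insert r k t).left.rk ≤ t.rk ∧
    (ZTree.insert r k t).right.rk ≤ t.rk := by
  induction t with
  | empty =>
    simp [ZTree.insert, ZTree.IsZipTree, ZTree.keys, ZTree.left, ZTree.right, ZTree.rk]
    omega
  | node rank key l rt ihl ihr =>
    obtain ⟨hlk, hrk, hlr, hrr, hl, hr⟩ := ht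
    by_cases hk : k = key
    · subst hk
      simp only [ZTree.insert, if_pos rfl]
      refine ⟨⟨hlk, hrk, hlr, hrr, hl, hr⟩, ?_, ?_, ?_⟩
      · ext x; simp [ZTree.keys]; try tauto
      · simpa [ZTree.left, ZTree.rk] using le_of_lt hlr
      · simpa [ZTree.right, ZTree.rk] using hrr
    · by_cases hlt : k < key
      · obtain ⟨ih1, ih2, ih3, ih4⟩ := ihl hl
        simp only [ZTree.insert, if_neg hk, if_pos hlt]
        rcases h : ZTree.insert r k l with _ | ⟨tr, tk, tl, trr⟩
        · exfalso
          rw [h] at ih2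
          have : k ∈ (ZTree.empty : ZTree α).keys := ih2 ▸ Or.inl rfl
          simp [ZTree.keys] at this
        · rw [h] at ih1 ih2 ih3 ih4
          dsimp only
          obtain ⟨i1, i2, i3, i4, i5, i6⟩ := ih1
          simp only [ZTree.left, ZTree.rk] at ih3
          simp only [ZTree.right, ZTree.rk] at ih4
          -- all keys of the inserted subtree are < key
          have hsub : ∀ x ∈ ({tk} ∪ tl.keys ∪ trr.keys : Set α), x < key := by
            intro x hx
            have : x ∈ ({k} ∪ l.keys : Set α) := ih2 ▸ (by exact hx)
            rcases this with h' | h'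
            · simp at h'; subst h'; exact hlt
            · exact hlk _ h'
          have htk : tk < key := hsub tk (by simp)
          by_cases hcmp : (tr : ℤ) < (rank : ℤ)
          · simp only [if_pos hcmp]
            refine ⟨⟨?_, hrk, hcmp, hrr, ⟨i1, i2, i3, i4, i5, i6⟩, hr⟩, ?_, ?_, ?_⟩
            · exact fun x hx => hsub x hx
            · ext x
              have := Set.ext_iff.mp ih2 x
              simp [ZTree.keys] at this ⊢; tauto
            · simpa [ZTree.left, ZTree.rk] using le_of_lt hcmp
            · simpa [ZTree.right, ZTree.rk] using hrr
          · push_neg at hcmp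
            simp only [if_neg (not_lt.mpr hcmp)]
            refine ⟨⟨i1, ?_, i3, hcmp, i5,
                ?_, hrk, lt_of_le_of_lt ih4 hlr, hrr, i6, hr⟩, ?_, ?_, ?_⟩
            · intro x hx
              simp only [ZTree.keys, Set.mem_union, Set.mem_singleton_iff] at hx
              rcases hx with (h' | h') | h'
              · subst h'; exact htk
              · exact i2 _ h'
              · exact htk.trans (hrk _ h')
            · intro x hx
              have : x < key := hsub x (by simp [ZTree.keys]; tauto)
              exact this
            · ext x
              have := Set.ext_iff.mp ih2 x
              simp [ZTree.keys] at this ⊢; tauto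
            · simp only [ZTree.left, ZTree.rk]
              exact le_of_lt (lt_of_le_of_lt ih3 hlr)
            · simp only [ZTree.right, ZTree.rk]; exact le_rfl
      · have hgt : key < k := lt_of_le_of_ne (not_lt.mp hlt) (Ne.symm hk)
        obtain ⟨ih1, ih2, ih3, ih4⟩ := ihr hr
        simp only [ZTree.insert, if_neg hk, if_neg hlt]
        rcases h : ZTree.insert r k rt with _ | ⟨tr, tk, tl, trr⟩
        · exfalso
          rw [h] at ih2
          have : k ∈ (ZTree.empty : ZTree α).keys := ih2 ▸ Or.inl rfl
          simp [ZTree.keys] at this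
        · rw [h] at ih1 ih2 ih3 ih4
          dsimp only
          obtain ⟨i1, i2, i3, i4, i5, i6⟩ := ih1
          simp only [ZTree.left, ZTree.rk] at ih3
          simp only [ZTree.right, ZTree.rk] at ih4
          have hsub : ∀ x ∈ ({tk} ∪ tl.keys ∪ trr.keys : Set α), key < x := by
            intro x hx
            have : x ∈ ({k} ∪ rt.keys : Set α) := ih2 ▸ (by exact hx)
            rcases this with h' | h'
            · simp at h'; subst h'; exact hgt
            · exact hrk _ h'
          have htk : key < tk := hsub tk (by simp)
          by_cases hcmp : (tr : ℤ) ≤ (rank : ℤ)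
          · simp only [if_pos hcmp]
            refine ⟨⟨hlk, ?_, hlr, hcmp, hl, ⟨i1, i2, i3, i4, i5, i6⟩⟩, ?_, ?_, ?_⟩
            · exact fun x hx => hsub x hx
            · ext x
              have := Set.ext_iff.mp ih2 x
              simp [ZTree.keys] at this ⊢; tauto
            · simpa [ZTree.left, ZTree.rk] using le_of_lt hlr
            · simpa [ZTree.right, ZTree.rk] using hcmp
          · push_neg at hcmp
            simp only [if_neg (not_le.mpr hcmp)]
            refine ⟨⟨?_, i2, hcmp, i4,
                ⟨hlk, ?_, hlr, le_trans ih3 hrr, hl, i5⟩, i6⟩, ?_, ?_, ?_⟩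
            · intro x hx
              simp only [ZTree.keys, Set.mem_union, Set.mem_singleton_iff] at hx
              rcases hx with (h' | h') | h'
              · subst h'; exact htk
              · exact (hlk _ h').trans htk
              · exact i1 _ h'
            · intro x hx
              exact hsub x (by simp [ZTree.keys]; tauto)
            · ext x
              have := Set.ext_iff.mp ih2 x
              simp [ZTree.keys] at this ⊢; tauto
            · simp only [ZTree.left, ZTree.rk]; exact le_rfl
            · simp only [ZTree.right, ZTree.rk]; exact le_trans ih4 hrr
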